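/- (Total energy of a polytropic star.) Let γ ∈ (6/5, 2) with γ ≠ 1, K > 0, G > 0, R > 0. Let ρ : [0,R] → ℝ be continuous, continuously differentiable on (0,R), with ρ(r) > 0 for r ∈ [0,R) and ρ(R) = 0. Set p(r) = K·ρ(r)^γ, M(r) = ∫₀^r 4π s² ρ(s) ds and Mtot = M(R) > 0, and assume p'(r) = −G·M(r)·ρ(r)/r² on (0,R). Then the total energy E := ∫₀^R (p(r)/(γ−1))·4π r² dr − ∫₀^R G·M(r)·M'(r)/r dr satisfies E = −((3γ−4)/(5γ−6))·G·Mtot²/R. -/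

import Mathlib

open Set intervalIntegral MeasureTheory Filter

set_option maxHeartbeats 1000000 in
/-- Total energy of a polytropic star `p = K·ρ^γ`, `γ ∈ (6/5, 2)`:
`E = E_T + E_G = −((3γ−4)/(5γ−6))·G·Mtot²/R`, where
`E_T = ∫₀^R (p/(γ−1))·4πr² dr` and `E_G = −∫₀^R G·M·M'/r dr`. -/
theorem stmt9 (γ K G R : ℝ) (hγ : γ ∈ Ioo (6 / 5 : ℝ) 2) (hγ1 : γ ≠ 1) (hK : 0 < K)
    (hG : 0 < G) (hR : 0 < R)
    (ρ ρ' : ℝ → ℝ)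
    (hρ_cont : ContinuousOn ρ (Icc 0 R))
    (hρ_deriv : ∀ r ∈ Ioo (0 : ℝ) R, HasDerivAt ρ (ρ' r) r)
    (hρ'_cont : ContinuousOn ρ' (Ioo 0 R))
    (hρ_pos : ∀ r ∈ Ico (0 : ℝ) R, 0 < ρ r) (hρR : ρ R = 0)
    (M : ℝ → ℝ)
    (hM : ∀ r, M r = ∫ s in (0 : ℝ)..r, 4 * Real.pi * s ^ 2 * ρ s)
    (hMtot : 0 < M R)
    (hp_deriv : ∀ r ∈ Ioo (0 : ℝ) R,
      HasDerivAt (fun s => K * ρ s ^ γ) (-(G * M r * ρ r) / r ^ 2) r) :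
    (∫ r in (0 : ℝ)..R, (K * ρ r ^ γ / (γ - 1)) * (4 * Real.pi * r ^ 2))
        - (∫ r in (0 : ℝ)..R, G * M r * (4 * Real.pi * r ^ 2 * ρ r) / r)
      = -((3 * γ - 4) / (5 * γ - 6)) * G * (M R) ^ 2 / R := by
  obtain ⟨hγ6, hγ2⟩ := hγ
  have hγ1' : (1:ℝ) < γ := by linarith
  have hγpos : (0:ℝ) < γ := by linarith
  have hγm1 : γ - 1 ≠ 0 := by intro h; apply hγ1; linarith
  have h5γ : 5*γ - 6 ≠ 0 := by intro h; nlinarith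
  have hπ := Real.pi_pos
  set g : ℝ → ℝ := fun s => 4 * Real.pi * s ^ 2 * ρ s with hgdef
  have hg_cont : ContinuousOn g (Icc 0 R) :=
    ((continuous_const.mul (continuous_pow 2)).continuousOn).mul hρ_cont
  have hM0 : M 0 = 0 := by rw [hM]; simp
  have hMfun : M = fun r => ∫ s in (0:ℝ)..r, g s := funext hM
  have huIcc : uIcc (0:ℝ) R = Icc 0 R := uIcc_of_le hR.le
  -- continuity of M
  have hM_cont : ContinuousOn M (Icc 0 R) := by
    rw [hMfun, ← huIcc]
    exact intervalIntegral.continuousOn_primitive_interval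
      (by rw [huIcc]; exact hg_cont.integrableOn_compact isCompact_Icc)
  -- derivative of M
  have hM_deriv : ∀ r ∈ Ioo (0:ℝ) R, HasDerivAt M (g r) r := by
    intro r hr
    rw [hMfun]
    have hsub : uIcc (0:ℝ) r ⊆ Icc 0 R := by
      rw [uIcc_of_le hr.1.le]; exact Icc_subset_Icc le_rfl hr.2.le
    refine intervalIntegral.integral_hasDerivAt_right
      ((hg_cont.mono hsub).intervalIntegrable ) ?_ ?_
    · exact AEStronglyMeasurable.stronglyMeasurableAtFilter_of_mem
        ((hg_cont.mono Ioo_subset_Icc_self).aestronglyMeasurable measurableSet_Ioo)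
        (Ioo_mem_nhds hr.1 hr.2)
    · exact hg_cont.continuousAt (Icc_mem_nhds hr.1 hr.2)
  -- continuity of rpow compositions
  have hργ_cont : ContinuousOn (fun r => ρ r ^ γ) (Icc 0 R) :=
    (Real.continuous_rpow_const hγpos.le).comp_continuousOn hρ_cont
  have hργ1_cont : ContinuousOn (fun r => ρ r ^ (γ-1)) (Icc 0 R) :=
    (Real.continuous_rpow_const (by linarith)).comp_continuousOn hρ_cont
  -- bound on M
  obtain ⟨C, hC⟩ : ∃ C, ∀ x ∈ Icc (0:ℝ) R, ‖g x‖ ≤ C :=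
    IsCompact.exists_bound_of_continuousOn isCompact_Icc hg_cont
  have hC0 : 0 ≤ C := le_trans (norm_nonneg _) (hC 0 ⟨le_rfl, hR.le⟩)
  have hMb : ∀ r ∈ Icc (0:ℝ) R, |M r| ≤ C * r := by
    intro r hr
    rw [hM]
    have := intervalIntegral.norm_integral_le_of_norm_le_const (C := C)
      (f := g) (a := 0) (b := r) (by
        intro x hx
        rw [uIoc_of_le hr.1] at hx
        exact hC x ⟨hx.1.le, hx.2.trans hr.2⟩)
    simpa [abs_of_nonneg hr.1] using this
  -- the singular part tends to 0 at the origin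
  have hsq : Tendsto (fun r => G * M r ^ 2 / r) (nhdsWithin 0 (Icc 0 R)) (nhds 0) := by
    apply squeeze_zero_norm' (a := fun r => G * C^2 * r)
    · filter_upwards [self_mem_nhdsWithin] with r hr
      rcases eq_or_lt_of_le hr.1 with h0 | h0
      · simp [← h0]
      · have h1 : |M r| ≤ C * r := hMb r hr
        have h2 : M r ^ 2 ≤ (C*r)^2 := by
          have := sq_abs (M r)
          nlinarith [abs_nonneg (M r)]
        rw [Real.norm_eq_abs, abs_div, abs_of_pos h0, div_le_iff₀ h0]
        rw [abs_mul, abs_of_pos hG, abs_of_nonneg (sq_nonneg (M r))]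
        nlinarith
    · have : Tendsto (fun r : ℝ => G * C^2 * r) (nhds 0) (nhds (G*C^2*0)) :=
        (continuous_const.mul continuous_id).tendsto 0
      simpa using this.mono_left nhdsWithin_le_nhds
  -- auxiliary functions
  set H : ℝ → ℝ := fun r => γ/(γ-1)*K*ρ r ^ (γ-1) with hHdef
  set F₁ : ℝ → ℝ := fun r => 4*Real.pi*r^3*(K*ρ r^γ) with hF₁def
  set F₂ : ℝ → ℝ := fun r => H r * M r - G * M r ^ 2 / r with hF₂def
  have hH_cont : ContinuousOn H (Icc 0 R) := continuousOn_const.mul hργ1_cont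
  have hF₁_cont : ContinuousOn F₁ (Icc 0 R) :=
    ((continuous_const.mul (continuous_pow 3)).continuousOn).mul
      (continuousOn_const.mul hργ_cont)
  have hF₂_cont : ContinuousOn F₂ (Icc 0 R) := by
    intro x hx
    rcases eq_or_ne x 0 with rfl | hx0
    · have t1 : ContinuousWithinAt (fun r => H r * M r) (Icc 0 R) 0 :=
        (hH_cont _ hx).mul (hM_cont _ hx)
      have t2 := t1.tendsto.sub hsq
      rw [ContinuousWithinAt]
      have hF20 : F₂ 0 = H 0 * M 0 - 0 := by simp [hF₂def]
      rw [hF20]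
      exact t2
    · exact ((hH_cont x hx).mul (hM_cont x hx)).sub
        (((continuousOn_const.mul ((hM_cont.pow 2))) x hx).div
          continuousWithinAt_id hx0)
  -- derivative facts on (0, R)
  have key : ∀ r ∈ Ioo (0:ℝ) R, K * (γ * ρ r ^ (γ-1) * ρ' r) = -(G * M r * ρ r) / r ^ 2 := by
    intro r hr
    have hρr : 0 < ρ r := hρ_pos r ⟨hr.1.le, hr.2⟩
    have d1 : HasDerivAt (fun s => ρ s ^ γ) (γ * ρ r ^ (γ-1) * ρ' r) r := by
      have := (Real.hasDerivAt_rpow_const (x := ρ r) (p := γ) (Or.inl hρr.ne')).comp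
        r (hρ_deriv r hr)
      simpa [mul_assoc, Function.comp_def] using this
    exact (d1.const_mul K).unique (hp_deriv r hr)
  have hH_deriv : ∀ r ∈ Ioo (0:ℝ) R, HasDerivAt H (-(G * M r) / r ^ 2) r := by
    intro r hr
    have hρr : 0 < ρ r := hρ_pos r ⟨hr.1.le, hr.2⟩
    have hrne : r ≠ 0 := ne_of_gt hr.1
    have d2 : HasDerivAt (fun s => ρ s ^ (γ-1)) ((γ-1) * ρ r ^ (γ-1-1) * ρ' r) r := by
      have := (Real.hasDerivAt_rpow_const (x := ρ r) (p := γ-1) (Or.inl hρr.ne')).comp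
        r (hρ_deriv r hr)
      simpa [mul_assoc, Function.comp_def] using this
    have d2' := d2.const_mul (γ/(γ-1)*K)
    have : HasDerivAt H (γ/(γ-1)*K * ((γ-1) * ρ r ^ (γ-1-1) * ρ' r)) r := by
      simpa [hHdef, mul_assoc] using d2'
    convert this using 1
    -- use key to compute the value
    have hk := key r hr
    have hsplit : ρ r ^ (γ-1) = ρ r ^ (γ-1-1) * ρ r := by
      rw [← Real.rpow_add_one hρr.ne' (γ-1-1)]
      norm_num
    rw [hsplit] at hk
    have hρne := hρr.ne'
    field_simp at hk ⊢
    nlinarith [hk, sq_nonneg (ρ r)]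
  have hF₁_deriv : ∀ r ∈ Ioo (0:ℝ) R,
      HasDerivAt F₁ (3*(4*Real.pi*r^2*(K*ρ r^γ)) - 4*Real.pi*G*M r*ρ r*r) r := by
    intro r hr
    have hrne : r ≠ 0 := ne_of_gt hr.1
    have dcube : HasDerivAt (fun s : ℝ => 4*Real.pi*s^3) (4*Real.pi*(3*r^2)) r := by
      simpa using (hasDerivAt_pow 3 r).const_mul (4*Real.pi)
    have := dcube.mul (hp_deriv r hr)
    have h2 : HasDerivAt F₁
        (4*Real.pi*(3*r^2) * (K*ρ r^γ) + 4*Real.pi*r^3 * (-(G * M r * ρ r) / r ^ 2)) r := this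
    convert h2 using 1
    field_simp
    ring
  have hF₂_deriv : ∀ r ∈ Ioo (0:ℝ) R,
      HasDerivAt F₂ (γ/(γ-1)*(4*Real.pi*r^2*(K*ρ r^γ)) - 2*(4*Real.pi*G*M r*ρ r*r)) r := by
    intro r hr
    have hρr : 0 < ρ r := hρ_pos r ⟨hr.1.le, hr.2⟩
    have hrne : r ≠ 0 := ne_of_gt hr.1
    have dM := hM_deriv r hr
    have dH := hH_deriv r hr
    have dprod := dH.mul dM
    have dsq : HasDerivAt (fun s => G * M s ^ 2) (G * (2 * M r ^ 1 * g r)) r :=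
      (dM.pow 2).const_mul G
    have ddiv : HasDerivAt (fun s => G * M s ^ 2 / s)
        ((G * (2 * M r ^ 1 * g r) * r - G * M r ^ 2 * 1) / r ^ 2) r :=
      dsq.div (hasDerivAt_id r) hrne
    have hall := dprod.sub ddiv
    convert hall using 1
    · rfl
    · rfl
    · rfl
    have hsplit : ρ r ^ γ = ρ r ^ (γ-1) * ρ r := by
      rw [← Real.rpow_add_one hρr.ne' (γ-1)]
      norm_num
    simp only [hHdef, hgdef, hsplit]
    field_simp
    ring
  -- integrability
  have ia : IntervalIntegrable (fun r => 4*Real.pi*r^2*(K*ρ r^γ)) volume 0 R := by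
    apply ContinuousOn.intervalIntegrable
    rw [huIcc]
    exact ((continuous_const.mul (continuous_pow 2)).continuousOn).mul
      (continuousOn_const.mul hργ_cont)
  have ib : IntervalIntegrable (fun r => 4*Real.pi*G*M r*ρ r*r) volume 0 R := by
    apply ContinuousOn.intervalIntegrable
    rw [huIcc]
    exact (((continuousOn_const.mul hM_cont).mul hρ_cont).mul continuousOn_id)
  set A := ∫ r in (0:ℝ)..R, 4*Real.pi*r^2*(K*ρ r^γ) with hAdef
  set B := ∫ r in (0:ℝ)..R, 4*Real.pi*G*M r*ρ r*r with hBdef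
  -- FTC applications
  have eq1 : 3*A - B = 0 := by
    have := intervalIntegral.integral_eq_sub_of_hasDeriv_right_of_le hR.le hF₁_cont
      (fun x hx => (hF₁_deriv x hx).hasDerivWithinAt)
      (((ia.const_mul 3).sub ib))
    rw [intervalIntegral.integral_sub (ia.const_mul 3) ib,
      intervalIntegral.integral_const_mul] at this
    rw [this]
    simp [hF₁def, hρR, Real.zero_rpow (ne_of_gt hγpos)]
  have eq2 : γ/(γ-1)*A - 2*B = -(G * (M R)^2 / R) := by
    have := intervalIntegral.integral_eq_sub_of_hasDeriv_right_of_le hR.le hF₂_cont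
      (fun x hx => (hF₂_deriv x hx).hasDerivWithinAt)
      (((ia.const_mul (γ/(γ-1))).sub (ib.const_mul 2)))
    rw [intervalIntegral.integral_sub (ia.const_mul (γ/(γ-1))) (ib.const_mul 2),
      intervalIntegral.integral_const_mul, intervalIntegral.integral_const_mul] at this
    rw [this]
    have hHR : H R = 0 := by simp [hHdef, hρR, Real.zero_rpow hγm1]
    have hF2R : F₂ R = -(G * (M R)^2 / R) := by simp [hF₂def, hHR]
    have hF20 : F₂ 0 = 0 := by simp [hF₂def, hM0]
    rw [hF2R, hF20, sub_zero]
  -- rewrite the goal integrals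
  have goal1 : (∫ r in (0:ℝ)..R, (K * ρ r ^ γ / (γ - 1)) * (4 * Real.pi * r ^ 2))
      = (γ-1)⁻¹ * A := by
    rw [hAdef, ← intervalIntegral.integral_const_mul]
    congr 1
    funext r
    field_simp
  have goal2 : (∫ r in (0:ℝ)..R, G * M r * (4 * Real.pi * r ^ 2 * ρ r) / r) = B := by
    rw [hBdef]
    congr 1
    funext r
    rcases eq_or_ne r 0 with rfl | hr
    · simp
    · field_simp
  rw [goal1, goal2]
  have hB : B = 3*A := by linarith
  rw [hB] at eq2 ⊢
  have hA : A = (γ-1)*G*(M R)^2/((5*γ-6)*R) := by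
    have h5γ' : γ*5-6 ≠ 0 := by intro h; apply h5γ; linarith
    field_simp at eq2 ⊢
    nlinarith [eq2]
  rw [hA]
  field_simp
  ring
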